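/- Let G be a graph with maximum degree at most 5, let c be a partial acyclic 5-colouring with forest colour classes, and let v be an uncoloured vertex whose coloured neighbours include exactly two vertices x, y of the same colour (all other coloured neighbours, if any, having pairwise distinct colours different from c(x)). If v cannot be assigned any of the 5 colours without creating an alternating bichromatic cycle or a monochromatic cycle through v, then the vertex x has at least 5 coloured neighbours with pairwise-relevant colours, contradicting deg(x) ≤ 5 with x adjacent to the uncoloured vertex v. Hence v can always be coloured in this situation. -/

import Mathlib

/-- The subgraph of `G` consisting of edges with one endpoint coloured `i`
and the other coloured `j`. -/
def bicol {V α : Type*} (G : SimpleGraph V) (c : V → α) (i j : α) : SimpleGraph V where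
  Adj u w := G.Adj u w ∧ ((c u = i ∧ c w = j) ∨ (c u = j ∧ c w = i))
  symm := ⟨fun u w h => ⟨h.1.symm, h.2.symm.imp And.symm And.symm⟩⟩
  loopless := ⟨fun u h => G.irrefl h.1⟩

/-- A partial acyclic 5-colouring whose colour classes induce forests. -/
def pGood {V : Type*} (G : SimpleGraph V) (c : V → Option (Fin 5)) : Prop :=
  (∀ i : Fin 5, (G.induce {x | c x = some i}).IsAcyclic) ∧
  (∀ i j : Fin 5, i ≠ j →
    (bicol G c (some i) (some j)).IsAcyclic)

/-- Restriction of a graph to a vertex set, keeping all of `V` as vertex type. -/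
def restrict {V : Type*} (G : SimpleGraph V) (s : Set V) : SimpleGraph V where
  Adj u w := G.Adj u w ∧ u ∈ s ∧ w ∈ s
  symm := ⟨fun u w h => ⟨h.1.symm, h.2.2, h.2.1⟩⟩
  loopless := ⟨fun u h => G.irrefl h.1⟩

lemma lift_walk {V : Type*} {G : SimpleGraph V} {s : Set V} {u w : V}
    (p : (restrict G s).Walk u w) :
    ∀ (hu : u ∈ s) (hw : w ∈ s),
    ∃ q : (G.induce s).Walk ⟨u, hu⟩ ⟨w, hw⟩,
      q.edges.map (Sym2.map Subtype.val) = p.edges ∧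
      q.support.map Subtype.val = p.support := by
  induction p with
  | nil =>
    intro hu hw
    exact ⟨SimpleGraph.Walk.nil, by simp, by simp⟩
  | cons h p ih =>
    intro hu hw
    obtain ⟨q, hq1, hq2⟩ := ih h.2.2 hw
    refine ⟨SimpleGraph.Walk.cons (by exact h.1) q, ?_, ?_⟩
    · simp [SimpleGraph.Walk.edges_cons, ← hq1]; rfl
    · simp [SimpleGraph.Walk.support_cons, ← hq2]; rfl

lemma restrict_isAcyclic {V : Type*} {G : SimpleGraph V} {s : Set V}
    (h : (G.induce s).IsAcyclic) : (restrict G s).IsAcyclic := by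
  intro r p hp
  cases p with
  | nil => exact hp.ne_nil rfl
  | cons hadj p' =>
    have hr : r ∈ s := hadj.2.1
    obtain ⟨q, hq1, hq2⟩ := lift_walk (SimpleGraph.Walk.cons hadj p') hr hr
    apply h q
    rw [SimpleGraph.Walk.isCycle_def] at hp ⊢
    refine ⟨?_, ?_, ?_⟩
    · rw [SimpleGraph.Walk.isTrail_def]
      have := hp.1.edges_nodup
      rw [← hq1] at this
      exact this.of_map _
    · intro hqnil
      rw [hqnil] at hq1
      simp [SimpleGraph.Walk.edges_cons] at hq1
    · have h3 := hp.2.2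
      rw [← hq2, ← List.map_tail] at h3
      exact h3.of_map _

lemma induce_isAcyclic_of_restrict {V : Type*} {G : SimpleGraph V} {s : Set V}
    (h : (restrict G s).IsAcyclic) : (G.induce s).IsAcyclic := by
  intro r p hp
  let f : G.induce s →g restrict G s :=
    ⟨Subtype.val, fun {a b} hab => ⟨hab, a.2, b.2⟩⟩
  exact h (p.map f) (hp.map (f := f) Subtype.val_injective)

lemma key_cycle {V : Type*} [DecidableEq V] {H' H : SimpleGraph V} {v : V}
    (hH : ∀ u w, H'.Adj u w → u ≠ v → w ≠ v → H.Adj u w)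
    (hac : H.IsAcyclic) (hnac : ¬ H'.IsAcyclic) :
    ∃ u w zu zw, u ≠ w ∧ H'.Adj v u ∧ H'.Adj v w ∧
      H'.Adj u zu ∧ zu ≠ v ∧ H'.Adj w zw ∧ zw ≠ v := by
  simp only [SimpleGraph.IsAcyclic, not_forall, not_not] at hnac
  obtain ⟨r, p, hp⟩ := hnac
  by_cases hv : v ∈ p.support
  · obtain ⟨q, hq⟩ : ∃ q : H'.Walk v v, q.IsCycle := ⟨p.rotate v hv, hp.rotate hv⟩
    cases q with
    | nil => exact absurd rfl hq.ne_nil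
    | cons h q' =>
      rename_i u
      rw [SimpleGraph.Walk.cons_isCycle_iff] at hq
      obtain ⟨hq'path, hq'edge⟩ := hq
      have huv : u ≠ v := h.ne'
      obtain ⟨zu, hzu, q'', hq''⟩ := SimpleGraph.Walk.exists_eq_cons_of_ne huv q'
      have hzuv : zu ≠ v := by
        rintro rfl
        apply hq'edge
        rw [hq'', SimpleGraph.Walk.edges_cons]
        exact List.mem_cons.mpr (Or.inl Sym2.eq_swap)
      have hrev : q'.reverse.IsPath := hq'path.reverse
      obtain ⟨w, hw, r', hr'⟩ := SimpleGraph.Walk.exists_eq_cons_of_ne h.ne q'.reverse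
      have huw : u ≠ w := by
        rintro rfl
        apply hq'edge
        have hmem : s(v, u) ∈ q'.reverse.edges := by
          rw [hr', SimpleGraph.Walk.edges_cons]
          exact List.mem_cons.mpr (Or.inl rfl)
        rwa [SimpleGraph.Walk.edges_reverse, List.mem_reverse] at hmem
      obtain ⟨zw, hzw, r'', hr''⟩ := SimpleGraph.Walk.exists_eq_cons_of_ne (Ne.symm huw) r'
      have hzwv : zw ≠ v := by
        rintro rfl
        rw [hr', SimpleGraph.Walk.cons_isPath_iff] at hrev
        apply hrev.2
        rw [hr'', SimpleGraph.Walk.support_cons]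
        exact List.mem_cons_of_mem _ r''.start_mem_support
      exact ⟨u, w, zu, zw, huw, h, hw, hzu, hzuv, hzw, hzwv⟩
  · exfalso
    have hsub : ∀ e ∈ p.edges, e ∈ H.edgeSet := by
      intro e
      refine Sym2.ind (fun a b hab => ?_) e
      have hadj : H'.Adj a b := p.adj_of_mem_edges hab
      have ha : a ∈ p.support := SimpleGraph.Walk.fst_mem_support_of_mem_edges p hab
      have hb : b ∈ p.support := SimpleGraph.Walk.snd_mem_support_of_mem_edges p hab
      exact (SimpleGraph.mem_edgeSet H).mpr
        (hH a b hadj (fun e => hv (e ▸ ha)) (fun e => hv (e ▸ hb)))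
    exact hac (p.transfer H hsub) (hp.transfer hsub)

/-- Case 1 of the extension lemma: if an uncoloured vertex `v` has exactly two coloured
neighbours `x, y` of the same colour and all other coloured neighbours have pairwise
distinct colours different from `c x`, then `v` can be coloured. -/
theorem stmt11 {V : Type*} [Fintype V] [DecidableEq V] (G : SimpleGraph V)
    (hΔ : ∀ w : V, (G.neighborSet w).ncard ≤ 5)
    (c : V → Option (Fin 5)) (hc : pGood G c)
    (v x y : V) (a : Fin 5)
    (hv : c v = none) (hx : G.Adj v x) (hy : G.Adj v y) (hxy : x ≠ y)
    (hcx : c x = some a) (hcy : c y = some a)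
    (hother : ∀ u, G.Adj v u → u ≠ x → u ≠ y → ∀ b : Fin 5, c u = some b → b ≠ a)
    (hdist : ∀ u w, G.Adj v u → G.Adj v w → u ≠ x → u ≠ y → w ≠ x → w ≠ y →
      (c u).isSome → c u = c w → u = w) :
    ∃ α : Fin 5, pGood G (Function.update c v (some α)) := by
  by_contra hcon
  push_neg at hcon
  have hxv : x ≠ v := fun e => by rw [e, hv] at hcx; exact nomatch hcx
  have hyv : y ≠ v := fun e => by rw [e, hv] at hcy; exact nomatch hcy
  -- classification of pairs of equal-coloured neighbours of `v`
  have CL : ∀ u w (b : Fin 5), G.Adj v u → G.Adj v w → u ≠ w → c u = some b → c w = some b →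
      b = a ∧ ((u = x ∧ w = y) ∨ (u = y ∧ w = x)) := by
    intro u w b huadj hwadj huw hcu hcw
    by_cases hux : u = x
    · subst hux
      have hba : b = a := Option.some.inj (hcu.symm.trans hcx)
      refine ⟨hba, Or.inl ⟨rfl, ?_⟩⟩
      by_contra hwy
      exact hother w hwadj huw.symm hwy b hcw hba
    · by_cases huy : u = y
      · subst huy
        have hba : b = a := Option.some.inj (hcu.symm.trans hcy)
        refine ⟨hba, Or.inr ⟨rfl, ?_⟩⟩
        by_contra hwx
        exact hother w hwadj hwx huw.symm b hcw hba
      · have hba : b ≠ a := hother u huadj hux huy b hcu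
        by_cases hwx : w = x
        · exact absurd (Option.some.inj ((hwx ▸ hcw).symm.trans hcx).symm).symm hba
        · by_cases hwy : w = y
          · exact absurd (Option.some.inj ((hwy ▸ hcw).symm.trans hcy)) hba
          · exact absurd (hdist u w huadj hwadj hux huy hwx hwy
              (by rw [hcu]; rfl) (hcu.trans hcw.symm)) huw
  -- for each colour α, extract a neighbour of `x` coloured α
  have hmain : ∀ α : Fin 5, ∃ z, G.Adj x z ∧ c z = some α := by
    intro α
    have hbad := hcon α
    set c' := Function.update c v (some α) with hc'def
    have hc'v : c' v = some α := Function.update_self v (some α) c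
    have hc'ne : ∀ u, u ≠ v → c' u = c u := fun u hu => Function.update_of_ne hu (some α) c
    have hc'x : c' x = c x := hc'ne x hxv
    unfold pGood at hbad
    rw [not_and_or] at hbad
    cases hbad with
    | inl h1 =>
      push_neg at h1
      obtain ⟨i, hi⟩ := h1
      by_cases hiα : i = α
      · subst hiα
        have hnacR : ¬ (restrict G {t | c' t = some i}).IsAcyclic :=
          fun hr => hi (induce_isAcyclic_of_restrict hr)
        have hacM : (restrict G {t | c t = some i}).IsAcyclic := restrict_isAcyclic (hc.1 i)
        have hedge : ∀ u w, (restrict G {t | c' t = some i}).Adj u w → u ≠ v → w ≠ v →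
            (restrict G {t | c t = some i}).Adj u w := by
          intro u w h huv hwv
          refine ⟨h.1, ?_, ?_⟩
          · show c u = some i
            rw [← hc'ne u huv]; exact h.2.1
          · show c w = some i
            rw [← hc'ne w hwv]; exact h.2.2
        obtain ⟨u, w, zu, zw, huw, hu, hw, hzu, hzuv, hzw, hzwv⟩ :=
          key_cycle hedge hacM hnacR
        have hcu : c u = some i := by rw [← hc'ne u hu.1.ne']; exact hu.2.2
        have hcw : c w = some i := by rw [← hc'ne w hw.1.ne']; exact hw.2.2
        obtain ⟨hba, hcase⟩ := CL u w i hu.1 hw.1 huw hcu hcw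
        rcases hcase with ⟨hux, -⟩ | ⟨-, hwx⟩
        · subst hux
          exact ⟨zu, hzu.1, by rw [← hc'ne zu hzuv]; exact hzu.2.2⟩
        · subst hwx
          exact ⟨zw, hzw.1, by rw [← hc'ne zw hzwv]; exact hzw.2.2⟩
      · exfalso
        apply hi
        have hset : {t | c' t = some i} = {t | c t = some i} := by
          ext t
          simp only [Set.mem_setOf_eq]
          by_cases htv : t = v
          · subst htv
            rw [hc'v, hv]
            constructor
            · exact fun hh => absurd (Option.some.inj hh).symm hiα
            · exact fun hh => nomatch hh
          · rw [hc'ne t htv]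
        rw [hset]
        exact hc.1 i
    | inr h2 =>
      push_neg at h2
      obtain ⟨i, j, hij, hbic⟩ := h2
      have hacB : (bicol G c (some i) (some j)).IsAcyclic := hc.2 i j hij
      have hedge : ∀ u w, (bicol G c' (some i) (some j)).Adj u w → u ≠ v → w ≠ v →
          (bicol G c (some i) (some j)).Adj u w := by
        intro u w h huv hwv
        refine ⟨h.1, ?_⟩
        rw [← hc'ne u huv, ← hc'ne w hwv]
        exact h.2
      obtain ⟨u, w, zu, zw, huw, hu, hw, hzu, hzuv, hzw, hzwv⟩ :=
        key_cycle hedge hacB hbic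
      by_cases hαi : α = i
      · subst hαi
        have hcu : c u = some j := by
          rcases hu.2 with ⟨-, h1⟩ | ⟨h1, -⟩
          · rw [← hc'ne u hu.1.ne']; exact h1
          · rw [hc'v] at h1; exact absurd (Option.some.inj h1) hij
        have hcw : c w = some j := by
          rcases hw.2 with ⟨-, h1⟩ | ⟨h1, -⟩
          · rw [← hc'ne w hw.1.ne']; exact h1
          · rw [hc'v] at h1; exact absurd (Option.some.inj h1) hij
        obtain ⟨hba, hcase⟩ := CL u w j hu.1 hw.1 huw hcu hcw
        have hcx' : c' x = some j := by rw [hc'x, hba]; exact hcx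
        rcases hcase with ⟨hux, -⟩ | ⟨-, hwx⟩
        · subst hux
          refine ⟨zu, hzu.1, ?_⟩
          rcases hzu.2 with ⟨h1, -⟩ | ⟨-, h2⟩
          · exact absurd (Option.some.inj (hcx'.symm.trans h1)).symm hij
          · rw [← hc'ne zu hzuv]; exact h2
        · subst hwx
          refine ⟨zw, hzw.1, ?_⟩
          rcases hzw.2 with ⟨h1, -⟩ | ⟨-, h2⟩
          · exact absurd (Option.some.inj (hcx'.symm.trans h1)).symm hij
          · rw [← hc'ne zw hzwv]; exact h2
      · have hαj : α = j := by
          rcases hu.2 with ⟨h1, -⟩ | ⟨h1, -⟩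
          · rw [hc'v] at h1; exact absurd (Option.some.inj h1) hαi
          · rw [hc'v] at h1; exact Option.some.inj h1
        subst hαj
        have hcu : c u = some i := by
          rcases hu.2 with ⟨h1, -⟩ | ⟨-, h1⟩
          · rw [hc'v] at h1; exact absurd (Option.some.inj h1) hαi
          · rw [← hc'ne u hu.1.ne']; exact h1
        have hcw : c w = some i := by
          rcases hw.2 with ⟨h1, -⟩ | ⟨-, h1⟩
          · rw [hc'v] at h1; exact absurd (Option.some.inj h1) hαi
          · rw [← hc'ne w hw.1.ne']; exact h1
        obtain ⟨hba, hcase⟩ := CL u w i hu.1 hw.1 huw hcu hcw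
        have hcx' : c' x = some i := by rw [hc'x, hba]; exact hcx
        rcases hcase with ⟨hux, -⟩ | ⟨-, hwx⟩
        · subst hux
          refine ⟨zu, hzu.1, ?_⟩
          rcases hzu.2 with ⟨-, h2⟩ | ⟨h1, -⟩
          · rw [← hc'ne zu hzuv]; exact h2
          · exact absurd (Option.some.inj (hcx'.symm.trans h1)).symm hαi
        · subst hwx
          refine ⟨zw, hzw.1, ?_⟩
          rcases hzw.2 with ⟨-, h2⟩ | ⟨h1, -⟩
          · rw [← hc'ne zw hzwv]; exact h2
          · exact absurd (Option.some.inj (hcx'.symm.trans h1)).symm hαi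
  -- counting: `x` has six distinct neighbours
  choose f hadjf hcolf using hmain
  have hfv : ∀ α, f α ≠ v := fun α e => by
    have h1 := hcolf α
    rw [e, hv] at h1
    exact nomatch h1
  have hinj : Function.Injective f := by
    intro α β hαβ
    have h1 := hcolf α
    rw [hαβ, hcolf β] at h1
    exact (Option.some.inj h1).symm
  have hvnot : v ∉ Set.range f := by
    rintro ⟨α, hαe⟩
    exact hfv α hαe
  have hsub : insert v (Set.range f) ⊆ G.neighborSet x := by
    intro z hz
    rcases Set.mem_insert_iff.mp hz with rfl | ⟨α, rfl⟩
    · exact hx.symm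
    · exact hadjf α
  have hcard : (insert v (Set.range f)).ncard = 6 := by
    rw [Set.ncard_insert_of_notMem hvnot (Set.toFinite _), ← Set.image_univ,
      Set.ncard_image_of_injective _ hinj, Set.ncard_univ]
    simp
  have hle := Set.ncard_le_ncard hsub (Set.toFinite _)
  rw [hcard] at hle
  have h5 := hΔ x
  omega
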